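/- Let d_1 ≥ ... ≥ d_n > 0, D_i(α) = Σ_{j=1}^i d_j^α, and 0 < α_ℓ < α_h. Then for every index i, D_i(α_h)/D_n(α_h) − D_i(α_ℓ)/D_n(α_ℓ) ≤ 2 ln(n)·(ln α_h − ln α_ℓ). -/

import Mathlib

open Finset

/-- `t ↦ -(t * log t)` is monotone on `(0, e⁻¹]`. -/
lemma aux_mul_log_mono {t s : ℝ} (ht : 0 < t) (hts : t ≤ s) (hs : s ≤ Real.exp (-1)) :
    -(t * Real.log t) ≤ -(s * Real.log s) := by
  have hs0 : 0 < s := lt_of_lt_of_le ht hts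
  have hlogs : Real.log s ≤ -1 := by
    have h := Real.log_le_log hs0 hs
    rwa [Real.log_exp] at h
  have h1 : Real.log s - Real.log t ≤ s / t - 1 := by
    have h := Real.log_le_sub_one_of_pos (div_pos hs0 ht)
    rwa [Real.log_div hs0.ne' ht.ne'] at h
  have h2 : t * (Real.log s - Real.log t) ≤ s - t := by
    have h3 : t * (s / t - 1) = s - t := by field_simp
    calc t * (Real.log s - Real.log t) ≤ t * (s / t - 1) :=
          mul_le_mul_of_nonneg_left h1 ht.le
      _ = s - t := h3
  have h4 : (s - t) * (Real.log s + 1) ≤ 0 :=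
    mul_nonpos_of_nonneg_of_nonpos (sub_nonneg.2 hts) (by linarith)
  nlinarith [h2, h4]

/-- Per-term entropy bound. -/
lemma aux_entropy_term (n : ℕ) (hn : 2 ≤ n) {q Z : ℝ} (hq : 0 < q) (hqZ : q ≤ Z) :
    q * (Real.log Z - Real.log q)
      ≤ 2 * Real.log n * q + 2 * Real.log n * Z / (n : ℝ) ^ 2 := by
  have hZ : 0 < Z := lt_of_lt_of_le hq hqZ
  have hn0 : (0 : ℝ) < n := by positivity
  have hn2 : (2 : ℝ) ≤ n := by exact_mod_cast hn
  have hL : 0 ≤ Real.log n := Real.log_nonneg (by linarith)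
  have hlogn2 : Real.log ((n : ℝ) ^ 2) = 2 * Real.log n := by
    rw [Real.log_pow]; push_cast; ring
  by_cases h : Z / (n : ℝ) ^ 2 ≤ q
  · have hZq : Z / q ≤ (n : ℝ) ^ 2 := by
      rw [div_le_iff₀ hq]
      rw [div_le_iff₀ (by positivity : (0:ℝ) < (n:ℝ)^2)] at h
      linarith
    have hlog : Real.log Z - Real.log q ≤ 2 * Real.log n := by
      rw [← Real.log_div hZ.ne' hq.ne', ← hlogn2]
      exact Real.log_le_log (by positivity) hZq
    have : q * (Real.log Z - Real.log q) ≤ q * (2 * Real.log n) :=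
      mul_le_mul_of_nonneg_left hlog hq.le
    have hpos2 : 0 ≤ 2 * Real.log n * Z / (n : ℝ) ^ 2 := by positivity
    nlinarith
  · push_neg at h
    set t : ℝ := q / Z with hts
    set s : ℝ := ((n : ℝ) ^ 2)⁻¹ with hss
    have ht : 0 < t := div_pos hq hZ
    have hts' : t ≤ s := by
      rw [hts, hss, div_le_iff₀ hZ]
      have : q < Z / (n:ℝ)^2 := h
      rw [div_eq_mul_inv] at this
      linarith [this]
    have hse : s ≤ Real.exp (-1) := by
      have h4 : (4 : ℝ) ≤ (n : ℝ) ^ 2 := by nlinarith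
      have hinv : s ≤ (4 : ℝ)⁻¹ := by
        rw [hss]
        exact inv_anti₀ (by norm_num) h4
      have he : (4 : ℝ)⁻¹ ≤ Real.exp (-1) := by
        rw [Real.exp_neg]
        have := Real.exp_one_lt_d9
        have hpos : (0:ℝ) < Real.exp 1 := Real.exp_pos 1
        rw [inv_le_inv₀ (by norm_num) hpos]
        linarith
      linarith
    have hmono := aux_mul_log_mono ht hts' hse
    have hslog : -(s * Real.log s) = 2 * Real.log n / (n : ℝ) ^ 2 := by
      rw [hss, Real.log_inv, hlogn2]; ring
    have htlog : -(t * Real.log t) = (q * (Real.log Z - Real.log q)) / Z := by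
      rw [hts, Real.log_div hq.ne' hZ.ne']
      field_simp
      ring
    rw [htlog, hslog] at hmono
    rw [div_le_iff₀ hZ] at hmono
    have heq : 2 * Real.log n / (n:ℝ)^2 * Z = 2 * Real.log n * Z / (n:ℝ)^2 := by ring
    rw [heq] at hmono
    have hq2 : 0 ≤ 2 * Real.log n * q := by positivity
    linarith

/-- Core algebraic inequality. -/
lemma aux_core (n i : ℕ) (hn : 2 ≤ n) (hi : i ≤ n) (q : ℕ → ℝ)
    (hq : ∀ j, j < n → 0 < q j) :
    (∑ j ∈ Finset.range i, q j * Real.log (q j)) * (∑ j ∈ Finset.range n, q j)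
      - (∑ j ∈ Finset.range i, q j) * (∑ j ∈ Finset.range n, q j * Real.log (q j))
      ≤ 2 * Real.log n * (∑ j ∈ Finset.range n, q j) ^ 2 := by
  have hn0 : (0:ℝ) < n := by positivity
  have hn2 : (2:ℝ) ≤ n := by exact_mod_cast hn
  have hL : 0 ≤ Real.log n := Real.log_nonneg (by linarith)
  set Z := ∑ j ∈ Finset.range n, q j with hZdef
  set P := ∑ j ∈ Finset.range i, q j with hPdef
  set A := ∑ j ∈ Finset.range i, q j * Real.log (q j) with hAdef
  set T := ∑ j ∈ Finset.Ico i n, q j with hTdef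
  set C := ∑ j ∈ Finset.Ico i n, q j * Real.log (q j) with hCdef
  have hsplitZ : Z = P + T := by
    rw [hZdef, hPdef, hTdef, Finset.range_eq_Ico, Finset.range_eq_Ico]
    exact (Finset.sum_Ico_consecutive _ (Nat.zero_le i) hi).symm
  have hsplitB : (∑ j ∈ Finset.range n, q j * Real.log (q j)) = A + C := by
    rw [hAdef, hCdef, Finset.range_eq_Ico, Finset.range_eq_Ico]
    exact (Finset.sum_Ico_consecutive _ (Nat.zero_le i) hi).symm
  have hZpos : 0 < Z := by
    rw [hZdef]
    exact Finset.sum_pos (fun j hj => hq j (Finset.mem_range.1 hj))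
      (by rw [Finset.nonempty_range_iff]; omega)
  have hqZ : ∀ j, j < n → q j ≤ Z := by
    intro j hj
    rw [hZdef]
    exact Finset.single_le_sum (fun k hk => (hq k (Finset.mem_range.1 hk)).le)
      (Finset.mem_range.2 hj)
  have hPnn : 0 ≤ P := Finset.sum_nonneg fun j hj =>
    (hq j (lt_of_lt_of_le (Finset.mem_range.1 hj) hi)).le
  have hTnn : 0 ≤ T := Finset.sum_nonneg fun j hj =>
    (hq j (Finset.mem_Ico.1 hj).2).le
  -- rewrite LHS as double sum
  have hLHS : A * Z - P * (A + C) = A * T - P * C := by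
    rw [hsplitZ]; ring
  rw [hsplitB, hLHS]
  have hdouble : A * T - P * C
      = ∑ j ∈ Finset.range i, ∑ k ∈ Finset.Ico i n,
          q j * q k * (Real.log (q j) - Real.log (q k)) := by
    rw [hAdef, hTdef, hPdef, hCdef, Finset.sum_mul_sum, Finset.sum_mul_sum,
      ← Finset.sum_sub_distrib]
    refine Finset.sum_congr rfl fun j _ => ?_
    rw [← Finset.sum_sub_distrib]
    exact Finset.sum_congr rfl fun k _ => by ring
  rw [hdouble]
  -- bound each inner double sum term
  have hinner : ∀ j ∈ Finset.range i, ∑ k ∈ Finset.Ico i n,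
      q j * q k * (Real.log (q j) - Real.log (q k))
      ≤ q j * (2 * Real.log n * T + (n : ℝ) * (2 * Real.log n * Z / (n:ℝ)^2)) := by
    intro j hj
    have hjn : j < n := lt_of_lt_of_le (Finset.mem_range.1 hj) hi
    have hqj := hq j hjn
    have hstep : ∀ k ∈ Finset.Ico i n,
        q j * q k * (Real.log (q j) - Real.log (q k))
        ≤ q j * (2 * Real.log n * q k + 2 * Real.log n * Z / (n:ℝ)^2) := by
      intro k hk
      have hkn : k < n := (Finset.mem_Ico.1 hk).2
      have hqk := hq k hkn
      have h1 : Real.log (q j) ≤ Real.log Z := Real.log_le_log hqj (hqZ j hjn)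
      have h2 : q j * q k * (Real.log (q j) - Real.log (q k))
          ≤ q j * (q k * (Real.log Z - Real.log (q k))) := by
        have := mul_le_mul_of_nonneg_left (sub_le_sub_right h1 (Real.log (q k)))
          (mul_nonneg hqj.le hqk.le)
        calc q j * q k * (Real.log (q j) - Real.log (q k))
            ≤ q j * q k * (Real.log Z - Real.log (q k)) := this
          _ = q j * (q k * (Real.log Z - Real.log (q k))) := by ring
      have h3 := aux_entropy_term n hn hqk (hqZ k hkn)
      exact h2.trans (mul_le_mul_of_nonneg_left h3 hqj.le)
    calc ∑ k ∈ Finset.Ico i n, q j * q k * (Real.log (q j) - Real.log (q k))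
        ≤ ∑ k ∈ Finset.Ico i n,
            q j * (2 * Real.log n * q k + 2 * Real.log n * Z / (n:ℝ)^2) :=
          Finset.sum_le_sum hstep
      _ = q j * (2 * Real.log n * T + ((n - i : ℕ) : ℝ) * (2 * Real.log n * Z / (n:ℝ)^2)) := by
          rw [← Finset.mul_sum, Finset.sum_add_distrib, ← Finset.mul_sum,
            Finset.sum_const, Nat.card_Ico, nsmul_eq_mul]
      _ ≤ q j * (2 * Real.log n * T + (n : ℝ) * (2 * Real.log n * Z / (n:ℝ)^2)) := by
          have hcast : ((n - i : ℕ) : ℝ) ≤ (n : ℝ) := by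
            exact_mod_cast Nat.sub_le n i
          have hX : 0 ≤ 2 * Real.log n * Z / (n:ℝ)^2 := by positivity
          have h8 := mul_le_mul_of_nonneg_right hcast hX
          exact mul_le_mul_of_nonneg_left (by linarith) hqj.le
  have hsum : ∑ j ∈ Finset.range i, ∑ k ∈ Finset.Ico i n,
      q j * q k * (Real.log (q j) - Real.log (q k))
      ≤ P * (2 * Real.log n * T + (n : ℝ) * (2 * Real.log n * Z / (n:ℝ)^2)) := by
    calc _ ≤ ∑ j ∈ Finset.range i,
        q j * (2 * Real.log n * T + (n : ℝ) * (2 * Real.log n * Z / (n:ℝ)^2)) :=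
          Finset.sum_le_sum hinner
      _ = P * (2 * Real.log n * T + (n : ℝ) * (2 * Real.log n * Z / (n:ℝ)^2)) := by
          rw [hPdef, Finset.sum_mul]
  refine hsum.trans ?_
  -- final arithmetic
  have hsimp : (n : ℝ) * (2 * Real.log n * Z / (n:ℝ)^2) = 2 * Real.log n * Z / (n : ℝ) := by
    field_simp
  rw [hsimp]
  have hdivn : 2 * Real.log n * Z / (n : ℝ) ≤ Real.log n * Z := by
    rw [div_le_iff₀ hn0]
    have h9 : 0 ≤ Real.log n * Z * ((n:ℝ) - 2) :=
      mul_nonneg (mul_nonneg hL hZpos.le) (by linarith)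
    nlinarith [h9]
  have hPT : P * T ≤ Z ^ 2 / 4 := by nlinarith [sq_nonneg (P - T)]
  have hPZ : P ≤ Z := by rw [hsplitZ]; linarith
  have h5 : P * (2 * Real.log n * T) ≤ 2 * Real.log n * (Z^2/4) := by
    have := mul_le_mul_of_nonneg_left hPT (by positivity : (0:ℝ) ≤ 2 * Real.log n)
    nlinarith
  have h6 : P * (2 * Real.log n * Z / (n:ℝ)) ≤ Z * (Real.log n * Z) := by
    have h7 : 0 ≤ 2 * Real.log n * Z / (n:ℝ) := by positivity
    calc P * (2 * Real.log n * Z / (n:ℝ)) ≤ Z * (2 * Real.log n * Z / (n:ℝ)) :=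
          mul_le_mul_of_nonneg_right hPZ h7
      _ ≤ Z * (Real.log n * Z) := mul_le_mul_of_nonneg_left hdivn hZpos.le
  nlinarith [h5, h6, mul_nonneg hL (sq_nonneg Z)]

/-- For `0 < α_ℓ < α_h`, the increase of the normalized partial sum is at most
`2 ln(n) (ln α_h − ln α_ℓ)`. -/
theorem stmt7 (n : ℕ) (hn : 2 ≤ n) (d : ℕ → ℝ)
    (hpos : ∀ j, j < n → 0 < d j)
    (hsorted : ∀ j k, j ≤ k → k < n → d k ≤ d j)
    (i : ℕ) (hi : i ≤ n) (αl αh : ℝ) (h0 : 0 < αl) (hlh : αl < αh) :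
    (∑ j ∈ Finset.range i, d j ^ αh) / (∑ j ∈ Finset.range n, d j ^ αh)
      - (∑ j ∈ Finset.range i, d j ^ αl) / (∑ j ∈ Finset.range n, d j ^ αl)
      ≤ 2 * Real.log n * (Real.log αh - Real.log αl) := by
  have hSnpos : ∀ a : ℝ, 0 < ∑ j ∈ Finset.range n, d j ^ a := by
    intro a
    exact Finset.sum_pos
      (fun j hj => Real.rpow_pos_of_pos (hpos j (Finset.mem_range.1 hj)) a)
      (by rw [Finset.nonempty_range_iff]; omega)
  set F : ℝ → ℝ :=
    fun a => (∑ j ∈ Finset.range i, d j ^ a) / (∑ j ∈ Finset.range n, d j ^ a) with hF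
  -- derivative of F
  have hFderiv : ∀ a : ℝ, HasDerivAt F
      (((∑ j ∈ Finset.range i, d j ^ a * Real.log (d j)) * (∑ j ∈ Finset.range n, d j ^ a)
        - (∑ j ∈ Finset.range i, d j ^ a) * (∑ j ∈ Finset.range n, d j ^ a * Real.log (d j)))
        / (∑ j ∈ Finset.range n, d j ^ a) ^ 2) a := by
    intro a
    have h1 : HasDerivAt (fun x : ℝ => ∑ j ∈ Finset.range i, d j ^ x)
        (∑ j ∈ Finset.range i, d j ^ a * Real.log (d j)) a :=
      HasDerivAt.fun_sum fun j hj =>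
        (Real.hasStrictDerivAt_const_rpow
          (hpos j (lt_of_lt_of_le (Finset.mem_range.1 hj) hi)) a).hasDerivAt
    have h2 : HasDerivAt (fun x : ℝ => ∑ j ∈ Finset.range n, d j ^ x)
        (∑ j ∈ Finset.range n, d j ^ a * Real.log (d j)) a :=
      HasDerivAt.fun_sum fun j hj =>
        (Real.hasStrictDerivAt_const_rpow (hpos j (Finset.mem_range.1 hj)) a).hasDerivAt
    exact h1.div h2 (hSnpos a).ne'
  -- the derivative bound
  have hbound : ∀ a : ℝ, 0 < a →
      ((∑ j ∈ Finset.range i, d j ^ a * Real.log (d j)) * (∑ j ∈ Finset.range n, d j ^ a)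
        - (∑ j ∈ Finset.range i, d j ^ a) * (∑ j ∈ Finset.range n, d j ^ a * Real.log (d j)))
        / (∑ j ∈ Finset.range n, d j ^ a) ^ 2 ≤ 2 * Real.log n * a⁻¹ := by
    intro a ha
    have hq : ∀ j, j < n → 0 < d j ^ a :=
      fun j hj => Real.rpow_pos_of_pos (hpos j hj) a
    have hcore := aux_core n i hn hi (fun j => d j ^ a) hq
    have e1 : (∑ j ∈ Finset.range i, d j ^ a * Real.log (d j ^ a))
        = a * ∑ j ∈ Finset.range i, d j ^ a * Real.log (d j) := by
      rw [Finset.mul_sum]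
      refine Finset.sum_congr rfl fun j hj => ?_
      rw [Real.log_rpow (hpos j (lt_of_lt_of_le (Finset.mem_range.1 hj) hi))]
      ring
    have e2 : (∑ j ∈ Finset.range n, d j ^ a * Real.log (d j ^ a))
        = a * ∑ j ∈ Finset.range n, d j ^ a * Real.log (d j) := by
      rw [Finset.mul_sum]
      refine Finset.sum_congr rfl fun j hj => ?_
      rw [Real.log_rpow (hpos j (Finset.mem_range.1 hj))]
      ring
    rw [e1, e2] at hcore
    have hZ2 : (0:ℝ) < (∑ j ∈ Finset.range n, d j ^ a) ^ 2 := pow_pos (hSnpos a) 2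
    rw [div_le_iff₀ hZ2]
    have h2i : 2 * Real.log n * a⁻¹ * (∑ j ∈ Finset.range n, d j ^ a) ^ 2
        = (2 * Real.log n * (∑ j ∈ Finset.range n, d j ^ a) ^ 2) / a := by
      field_simp
    rw [h2i, le_div_iff₀ ha]
    nlinarith [hcore]
  -- monotonicity of G
  set G : ℝ → ℝ := fun a => 2 * Real.log n * Real.log a - F a with hG
  have hGderiv : ∀ a : ℝ, 0 < a → HasDerivAt G
      (2 * Real.log n * a⁻¹
        - ((∑ j ∈ Finset.range i, d j ^ a * Real.log (d j)) * (∑ j ∈ Finset.range n, d j ^ a)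
        - (∑ j ∈ Finset.range i, d j ^ a) * (∑ j ∈ Finset.range n, d j ^ a * Real.log (d j)))
        / (∑ j ∈ Finset.range n, d j ^ a) ^ 2) a := by
    intro a ha
    exact ((Real.hasDerivAt_log ha.ne').const_mul (2 * Real.log n)).sub (hFderiv a)
  have hmono : MonotoneOn G (Set.Icc αl αh) := by
    apply monotoneOn_of_deriv_nonneg (convex_Icc αl αh)
    · intro a ha
      have ha0 : 0 < a := lt_of_lt_of_le h0 ha.1
      exact (hGderiv a ha0).differentiableAt.continuousAt.continuousWithinAt
    · intro a ha
      rw [interior_Icc] at ha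
      have ha0 : 0 < a := lt_trans h0 ha.1
      exact (hGderiv a ha0).differentiableAt.differentiableWithinAt
    · intro a ha
      rw [interior_Icc] at ha
      have ha0 : 0 < a := lt_trans h0 ha.1
      rw [(hGderiv a ha0).deriv]
      have := hbound a ha0
      linarith
  have hfin := hmono (Set.left_mem_Icc.2 hlh.le) (Set.right_mem_Icc.2 hlh.le) hlh.le
  simp only [hG] at hfin
  have : F αh - F αl ≤ 2 * Real.log n * (Real.log αh - Real.log αl) := by linarith
  simpa [hF] using this
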